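/- Let U = [u_1,…,u_{d1}] ∈ ℝ^{d2×d1} and V = [v_1,…,v_{d1}] ∈ ℝ^{d0×d1}, let x_1,…,x_n ∈ ℝ^{d0} and y_1,…,y_n ∈ ℝ^{d2}, and let p ∈ [0,1). Let B be a random d1×d1 diagonal matrix whose diagonal entries are independent, each taking value 1/(1−p) with probability 1−p and 0 with probability p. Then (1/n)·Σ_{i=1}^n E_B[‖y_i − U B σ(Vᵀ x_i)‖²] = (1/n)·Σ_{i=1}^n ‖y_i − U σ(Vᵀ x_i)‖² + (p/(1−p))·Σ_{j=1}^{d1} ‖u_j‖²·(1/n)·Σ_{i=1}^n σ(v_jᵀ x_i)². -/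

import Mathlib

open MeasureTheory Matrix

/-- The law of a single dropout mask entry: `true` (kept) w.p. `1 - p`,
`false` (dropped) w.p. `p`. -/
noncomputable def dropMeasure (p : ℝ) (hp0 : 0 ≤ p) : Measure Bool :=
  (PMF.bernoulli (Real.toNNReal (1 - p))
    (Real.toNNReal_le_one.mpr (by linarith))).toMeasure

variable {p : ℝ} (hp0 : 0 ≤ p) (hp1 : p < 1)

lemma drop_integral (hp1 : p < 1) (g : Bool → ℝ) :
    ∫ b, g b ∂(dropMeasure p hp0) = (1 - p) * g true + p * g false := by
  rw [dropMeasure, PMF.integral_eq_sum]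
  have h1 : (0:ℝ) ≤ 1 - p := by linarith
  have h2 : 1 - ENNReal.ofReal (1 - p) = ENNReal.ofReal p := by
    rw [← ENNReal.ofReal_one, ← ENNReal.ofReal_sub _ h1]; norm_num
  simp [PMF.bernoulli_apply, ENNReal.toReal_ofReal h1, h2,
    ENNReal.toReal_ofReal hp0, mul_comm]
  rw [max_eq_left h1, NNReal.coe_sub (Real.toNNReal_le_one.mpr (by linarith)), NNReal.coe_one,
    Real.coe_toNNReal _ h1]
  ring

instance : IsProbabilityMeasure (dropMeasure p hp0) := by
  rw [dropMeasure]; infer_instance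

lemma drop_univ : ((dropMeasure p hp0) {false, true}).toReal = 1 := by
  have h : ({false, true} : Set Bool) = Set.univ := by ext b; cases b <;> simp
  rw [h, measure_univ, ENNReal.toReal_one]

lemma pi_prod {d1 : ℕ} (F : Fin d1 → Bool → ℝ) :
    ∫ ω : Fin d1 → Bool, ∏ m, F m (ω m) ∂(Measure.pi fun _ => dropMeasure p hp0)
      = ∏ m, ∫ b, F m b ∂(dropMeasure p hp0) := by
  letI : MeasureSpace Bool := ⟨dropMeasure p hp0⟩
  haveI : IsProbabilityMeasure (volume : Measure Bool) :=
    (inferInstance : IsProbabilityMeasure (dropMeasure p hp0))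
  exact MeasureTheory.integral_fintype_prod_eq_prod F

lemma pi_single {d1 : ℕ} (G : Bool → ℝ) (j : Fin d1) :
    ∫ ω : Fin d1 → Bool, G (ω j) ∂(Measure.pi fun _ => dropMeasure p hp0)
      = ∫ b, G b ∂(dropMeasure p hp0) := by
  have h2 : (fun ω : Fin d1 → Bool => G (ω j))
      = fun ω => ∏ m, (fun m b => if m = j then G b else 1) m (ω m) := by
    funext ω
    rw [Finset.prod_eq_single j (by intro m _ hm; simp [hm, drop_univ]) (by simp)]
    simp
  rw [h2, pi_prod hp0 (F := fun m b => if m = j then G b else 1),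
    Finset.prod_eq_single j (by intro m _ hm; simp [hm, measureReal_def, drop_univ]) (by simp)]
  simp

lemma pi_pair {d1 : ℕ} (G H : Bool → ℝ) {j l : Fin d1} (hjl : j ≠ l) :
    ∫ ω : Fin d1 → Bool, G (ω j) * H (ω l) ∂(Measure.pi fun _ => dropMeasure p hp0)
      = (∫ b, G b ∂(dropMeasure p hp0)) * ∫ b, H b ∂(dropMeasure p hp0) := by
  have key : ∀ f : Fin d1 → ℝ, (∀ m, m ≠ j → m ≠ l → f m = 1) →
      ∏ m, f m = f j * f l := by
    intro f hf
    rw [← Finset.mul_prod_erase Finset.univ f (Finset.mem_univ j),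
      ← Finset.mul_prod_erase _ f (Finset.mem_erase.mpr ⟨hjl.symm, Finset.mem_univ l⟩)]
    rw [Finset.prod_eq_one (by intro m hm; simp at hm; exact hf m hm.2 hm.1), mul_one]
  have h2 : (fun ω : Fin d1 → Bool => G (ω j) * H (ω l))
      = fun ω => ∏ m, (fun m b => if m = j then G b else if m = l then H b else 1) m (ω m) := by
    funext ω
    rw [key _ (by intro m h1 h3; simp [h1, h3, drop_univ])]
    simp [hjl, Ne.symm hjl]
  rw [h2, pi_prod hp0 (F := fun m b => if m = j then G b else if m = l then H b else 1), key _ (by intro m h1 h3; simp [h1, h3, measureReal_def, drop_univ])]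
  simp [hjl, Ne.symm hjl]

lemma exp_sq (hp1 : p < 1) {d1 : ℕ} (w : Fin d1 → ℝ) (c : ℝ) :
    ∫ ω : Fin d1 → Bool, (c - ∑ j, w j * (if ω j then (1 - p)⁻¹ else 0)) ^ 2
        ∂(Measure.pi fun _ : Fin d1 => dropMeasure p hp0)
    = (c - ∑ j, w j) ^ 2 + (p / (1 - p)) * ∑ j, (w j) ^ 2 := by
  have h1p : (1 : ℝ) - p ≠ 0 := by intro h; linarith
  have hint : ∀ f : (Fin d1 → Bool) → ℝ,
      Integrable f (Measure.pi fun _ : Fin d1 => dropMeasure p hp0) :=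
    fun f => .of_finite
  set β : Bool → ℝ := fun b => if b then (1 - p)⁻¹ else 0 with hβ
  have Eβ : ∫ b, β b ∂(dropMeasure p hp0) = 1 := by
    rw [drop_integral hp0 hp1]; simp [hβ]; field_simp
  have Eβ2 : ∫ b, (β b) ^ 2 ∂(dropMeasure p hp0) = (1 - p)⁻¹ := by
    rw [drop_integral hp0 hp1]; simp [hβ, sq]; field_simp
  have hexp : (fun ω : Fin d1 → Bool => (c - ∑ j, w j * β (ω j)) ^ 2)
      = fun ω => c ^ 2 - 2 * c * (∑ j, w j * β (ω j))
          + ∑ j, ∑ l, (w j * β (ω j)) * (w l * β (ω l)) := by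
    funext ω
    rw [← Finset.sum_mul_sum Finset.univ Finset.univ (fun j => w j * β (ω j))
      (fun l => w l * β (ω l))]
    ring
  have hS : ∫ ω : Fin d1 → Bool, (∑ j, w j * β (ω j))
      ∂(Measure.pi fun _ : Fin d1 => dropMeasure p hp0) = ∑ j, w j := by
    rw [integral_finset_sum _ (fun j _ => hint _)]
    refine Finset.sum_congr rfl fun j _ => ?_
    rw [integral_const_mul, pi_single hp0 β j, Eβ, mul_one]
  have hQ : ∫ ω : Fin d1 → Bool,
        (∑ j, ∑ l, (w j * β (ω j)) * (w l * β (ω l)))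
        ∂(Measure.pi fun _ : Fin d1 => dropMeasure p hp0)
      = ∑ j, ∑ l, w j * w l * (if j = l then (1 - p)⁻¹ else 1) := by
    rw [integral_finset_sum _ (fun j _ => hint _)]
    refine Finset.sum_congr rfl fun j _ => ?_
    rw [integral_finset_sum _ (fun l _ => hint _)]
    refine Finset.sum_congr rfl fun l _ => ?_
    have h' : (fun ω : Fin d1 → Bool => (w j * β (ω j)) * (w l * β (ω l)))
        = fun ω => (w j * w l) * (β (ω j) * β (ω l)) := by funext ω; ring
    rw [h', integral_const_mul]
    by_cases hjl : j = l
    · subst hjl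
      have h'' : (fun ω : Fin d1 → Bool => β (ω j) * β (ω j))
          = fun ω => (fun b => β b ^ 2) (ω j) := by funext ω; ring
      rw [if_pos rfl, h'', pi_single hp0 (fun b => β b ^ 2) j, Eβ2]
    · rw [if_neg hjl, pi_pair hp0 β β hjl, Eβ, one_mul, mul_one]
  have hsum : ∑ j, ∑ l, w j * w l * (if j = l then (1 - p)⁻¹ else 1)
      = (∑ j, w j) ^ 2 + (p / (1 - p)) * ∑ j, (w j) ^ 2 := by
    have h1 : ∀ j l : Fin d1, w j * w l * (if j = l then (1 - p)⁻¹ else 1)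
        = w j * w l + (if j = l then w j * w l * ((1 - p)⁻¹ - 1) else 0) := by
      intro j l; split <;> ring
    simp_rw [h1, Finset.sum_add_distrib]
    have h2 : ∀ j : Fin d1,
        (∑ l, if j = l then w j * w l * ((1 - p)⁻¹ - 1) else 0)
          = w j ^ 2 * ((1 - p)⁻¹ - 1) := by
      intro j
      rw [Finset.sum_ite_eq]
      simp [sq]
    simp_rw [h2]
    have h3 : (1 - p)⁻¹ - 1 = p / (1 - p) := by field_simp; ring
    rw [sq (∑ j, w j), Finset.sum_mul_sum, h3, Finset.mul_sum]
    congr 1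
    exact Finset.sum_congr rfl fun j _ => by ring
  haveI : IsProbabilityMeasure (Measure.pi fun _ : Fin d1 => dropMeasure p hp0) :=
    inferInstance
  rw [hexp, integral_add (hint _) (hint _), integral_sub (hint _) (hint _),
    integral_const_mul, hS, hQ, hsum, integral_const]
  simp only [measure_univ, probReal_univ, ENNReal.toReal_one, smul_eq_mul, one_mul]
  ring

/-- **Dropout objective for two-layer ReLU networks.**
Averaging over the random diagonal dropout matrix `B` (iid diagonal entries,
`1/(1-p)` w.p. `1-p`, `0` w.p. `p`), the dropout empirical risk
`(1/n) Σ_i E_B ‖y_i - U B σ(Vᵀ x_i)‖²` equals the plain empirical risk plus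
`(p/(1-p)) Σ_j ‖u_j‖² (1/n) Σ_i σ(v_jᵀ x_i)²`. -/
theorem dropout_objective_two_layer_relu
    {d0 d1 d2 n : ℕ}
    (U : Matrix (Fin d2) (Fin d1) ℝ) (V : Matrix (Fin d0) (Fin d1) ℝ)
    (x : Fin n → Fin d0 → ℝ) (y : Fin n → Fin d2 → ℝ)
    (p : ℝ) (hp0 : 0 ≤ p) (hp1 : p < 1) :
    (1 / n : ℝ) * ∑ i : Fin n,
      ∫ ω : Fin d1 → Bool,
        ∑ k : Fin d2,
          (y i k - U.mulVec
            (fun j => (if ω j then (1 - p)⁻¹ else 0) * max (Vᵀ.mulVec (x i) j) 0) k) ^ 2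
        ∂(Measure.pi fun _ : Fin d1 => dropMeasure p hp0)
    = (1 / n : ℝ) * ∑ i : Fin n, ∑ k : Fin d2,
        (y i k - U.mulVec (fun j => max (Vᵀ.mulVec (x i) j) 0) k) ^ 2
      + (p / (1 - p)) * ∑ j : Fin d1,
          (∑ k : Fin d2, (U k j) ^ 2) *
            ((1 / n : ℝ) * ∑ i : Fin n, max (Vᵀ.mulVec (x i) j) 0 ^ 2) := by
  set a : Fin n → Fin d1 → ℝ := fun i j => max (Vᵀ.mulVec (x i) j) 0 with ha
  have hmv : ∀ i k, U.mulVec (fun j => a i j) k = ∑ j, U k j * a i j := by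
    intro i k; simp [Matrix.mulVec, dotProduct]
  have hi : ∀ i : Fin n,
      (∫ ω : Fin d1 → Bool,
          ∑ k : Fin d2,
            (y i k - U.mulVec (fun j => (if ω j then (1 - p)⁻¹ else 0) * a i j) k) ^ 2
          ∂(Measure.pi fun _ : Fin d1 => dropMeasure p hp0))
      = ∑ k : Fin d2, ((y i k - ∑ j, U k j * a i j) ^ 2
          + (p / (1 - p)) * ∑ j, (U k j * a i j) ^ 2) := by
    intro i
    rw [integral_finset_sum _ (fun k _ => .of_finite)]
    refine Finset.sum_congr rfl fun k _ => ?_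
    have h' : (fun ω : Fin d1 → Bool =>
        (y i k - U.mulVec (fun j => (if ω j then (1 - p)⁻¹ else 0) * a i j) k) ^ 2)
        = fun ω => (y i k - ∑ j, (U k j * a i j) * (if ω j then (1 - p)⁻¹ else 0)) ^ 2 := by
      funext ω
      simp only [Matrix.mulVec, dotProduct]
      congr 2
      exact Finset.sum_congr rfl fun j _ => by ring
    rw [h', exp_sq hp0 hp1]
  simp only [show ∀ i j, max (Vᵀ.mulVec (x i) j) 0 = a i j from fun _ _ => rfl]
  simp only [hi, hmv]
  have hj : ∀ j : Fin d1, (∑ k, (U k j) ^ 2) * ((1 / n : ℝ) * ∑ i, a i j ^ 2)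
      = (1 / n : ℝ) * ∑ k, ∑ i, (U k j * a i j) ^ 2 := by
    intro j
    rw [mul_left_comm, Finset.sum_mul_sum]
    congr 1
    exact Finset.sum_congr rfl fun k _ =>
      Finset.sum_congr rfl fun i _ => by ring
  simp only [hj]
  have comm3 : ∑ i : Fin n, ∑ k : Fin d2, ∑ j : Fin d1, (U k j * a i j) ^ 2
      = ∑ j : Fin d1, ∑ k : Fin d2, ∑ i : Fin n, (U k j * a i j) ^ 2 :=
    calc ∑ i : Fin n, ∑ k : Fin d2, ∑ j : Fin d1, (U k j * a i j) ^ 2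
        = ∑ k : Fin d2, ∑ i : Fin n, ∑ j : Fin d1, (U k j * a i j) ^ 2 :=
          Finset.sum_comm
      _ = ∑ k : Fin d2, ∑ j : Fin d1, ∑ i : Fin n, (U k j * a i j) ^ 2 :=
          Finset.sum_congr rfl fun k _ => Finset.sum_comm
      _ = ∑ j : Fin d1, ∑ k : Fin d2, ∑ i : Fin n, (U k j * a i j) ^ 2 :=
          Finset.sum_comm
  simp only [Finset.sum_add_distrib, mul_add, ← Finset.mul_sum]
  rw [comm3]
  ring
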